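/- Fix an integer p ≥ 1. There exists a constant C = C(p) > 0 such that for every N ≥ 1, E[ sup_{x ∈ S^N} H(x) ] ≤ C · N. -/

import Mathlib

open MeasureTheory ProbabilityTheory

/-- The spherical `p`-spin Hamiltonian with coefficients `J`:
`H(x) = N^{-(p-1)/2} Σ_{i₁,…,i_p} J_{i₁,…,i_p} x_{i₁}⋯x_{i_p}`. -/
noncomputable def pspin (p N : ℕ) (J : (Fin p → Fin N) → ℝ)
    (x : EuclideanSpace ℝ (Fin N)) : ℝ :=
  (N : ℝ) ^ (-(((p : ℝ) - 1) / 2)) * ∑ i : Fin p → Fin N, J i * ∏ j, x (i j)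

/-- The sphere `S^N` of radius `√N` in `ℝ^N`. -/
noncomputable def sphereN (N : ℕ) : Set (EuclideanSpace ℝ (Fin N)) :=
  Metric.sphere (0 : EuclideanSpace ℝ (Fin N)) (Real.sqrt N)

section Aux
open Finset Metric ENNReal NNReal Real

noncomputable def tensorA {p N : ℕ} (J : (Fin p → Fin N) → ℝ)
    (y : Fin p → EuclideanSpace ℝ (Fin N)) : ℝ :=
  ∑ i : Fin p → Fin N, J i * ∏ j, (y j) (i j)

lemma prod_update {p N : ℕ} (y : Fin p → EuclideanSpace ℝ (Fin N)) (j : Fin p)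
    (w : EuclideanSpace ℝ (Fin N)) (i : Fin p → Fin N) :
    ∏ m, (Function.update y j w) m (i m) = w (i j) * ∏ m ∈ univ.erase j, (y m) (i m) := by
  rw [← Finset.mul_prod_erase univ _ (mem_univ j), Function.update_self]
  congr 1
  exact Finset.prod_congr rfl fun m hm => by
    rw [Function.update_of_ne (Finset.ne_of_mem_erase hm)]

lemma tensorA_update_add {p N : ℕ} (J : (Fin p → Fin N) → ℝ)
    (y : Fin p → EuclideanSpace ℝ (Fin N)) (j : Fin p) (u v : EuclideanSpace ℝ (Fin N)) :
    tensorA J (Function.update y j (u + v)) =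
      tensorA J (Function.update y j u) + tensorA J (Function.update y j v) := by
  simp only [tensorA, prod_update, ← Finset.sum_add_distrib]
  refine Finset.sum_congr rfl fun i _ => ?_
  have : (u + v) (i j) = u (i j) + v (i j) := rfl
  rw [this]; ring

lemma tensorA_update_smul {p N : ℕ} (J : (Fin p → Fin N) → ℝ)
    (y : Fin p → EuclideanSpace ℝ (Fin N)) (j : Fin p) (c : ℝ) (u : EuclideanSpace ℝ (Fin N)) :
    tensorA J (Function.update y j (c • u)) = c * tensorA J (Function.update y j u) := by
  simp only [tensorA, prod_update, Finset.mul_sum]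
  refine Finset.sum_congr rfl fun i _ => ?_
  have : (c • u) (i j) = c * u (i j) := rfl
  rw [this]; ring

lemma sum_prod_sq {p N : ℕ} (y : Fin p → EuclideanSpace ℝ (Fin N)) :
    ∑ i : Fin p → Fin N, (∏ j, (y j) (i j)) ^ 2 = ∏ j, ‖y j‖ ^ 2 := by
  have h1 : ∀ j : Fin p, ‖y j‖ ^ 2 = ∑ m, (y j m) ^ 2 := by
    intro j
    rw [EuclideanSpace.norm_eq, Real.sq_sqrt]
    · exact Finset.sum_congr rfl fun m _ => by rw [Real.norm_eq_abs, sq_abs]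
    · positivity
  simp_rw [h1, Finset.prod_univ_sum, Fintype.piFinset_univ]
  exact Finset.sum_congr rfl fun i _ => by rw [← Finset.prod_pow]

lemma abs_tensorA_le {p N : ℕ} (J : (Fin p → Fin N) → ℝ)
    (y : Fin p → EuclideanSpace ℝ (Fin N)) (hy : ∀ j, ‖y j‖ ≤ 1) :
    |tensorA J y| ≤ Real.sqrt (∑ i : Fin p → Fin N, J i ^ 2) := by
  have h := Finset.sum_mul_sq_le_sq_mul_sq Finset.univ J (fun i => ∏ j, (y j) (i j))
  rw [sum_prod_sq] at h
  have hb : ∏ j, ‖y j‖ ^ 2 ≤ 1 :=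
    Finset.prod_le_one (fun j _ => by positivity)
      (fun j _ => by nlinarith [hy j, norm_nonneg (y j)])
  have h2 : (tensorA J y) ^ 2 ≤ ∑ i : Fin p → Fin N, J i ^ 2 := by
    have hs : (0:ℝ) ≤ ∑ i : Fin p → Fin N, J i ^ 2 := by positivity
    calc (tensorA J y)^2 ≤ (∑ i : Fin p → Fin N, J i ^ 2) * ∏ j, ‖y j‖ ^ 2 := h
    _ ≤ (∑ i : Fin p → Fin N, J i ^ 2) * 1 := by exact mul_le_mul_of_nonneg_left hb hs
    _ = _ := mul_one _
  calc |tensorA J y| = Real.sqrt ((tensorA J y)^2) := (Real.sqrt_sq_eq_abs _).symm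
  _ ≤ _ := Real.sqrt_le_sqrt h2

lemma tensorA_net_bound {p N : ℕ} (J : (Fin p → Fin N) → ℝ)
    (T : Finset (EuclideanSpace ℝ (Fin N))) (hT0 : T.Nonempty)
    (hT1 : ∀ t ∈ T, ‖t‖ ≤ 1)
    (hTnet : ∀ y : EuclideanSpace ℝ (Fin N), ‖y‖ ≤ 1 → ∃ t ∈ T, ‖y - t‖ ≤ 1/2)
    (B : ℝ)
    (hB : ∀ t : Fin p → EuclideanSpace ℝ (Fin N), (∀ j, t j ∈ T) → |tensorA J t| ≤ B)
    (y : Fin p → EuclideanSpace ℝ (Fin N)) (hy : ∀ j, ‖y j‖ ≤ 1) :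
    |tensorA J y| ≤ 2 ^ p * B := by
  obtain ⟨t₀, ht₀⟩ := hT0
  set AS : ℕ → Set ℝ := fun k => {r | ∃ z : Fin p → EuclideanSpace ℝ (Fin N),
    (∀ j, ‖z j‖ ≤ 1) ∧ (∀ j : Fin p, (j : ℕ) < k → z j ∈ T) ∧ r = |tensorA J z|} with hAS
  have hmem : ∀ k (z : Fin p → EuclideanSpace ℝ (Fin N)), (∀ j, ‖z j‖ ≤ 1) →
      (∀ j : Fin p, (j : ℕ) < k → z j ∈ T) → |tensorA J z| ∈ AS k :=
    fun k z h1 h2 => ⟨z, h1, h2, rfl⟩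
  have hne : ∀ k, (AS k).Nonempty := fun k =>
    ⟨_, hmem k (fun _ => t₀) (fun _ => hT1 t₀ ht₀) (fun _ _ => ht₀)⟩
  have hbdd : ∀ k, BddAbove (AS k) := by
    intro k
    refine ⟨Real.sqrt (∑ i : Fin p → Fin N, J i ^ 2), fun r hr => ?_⟩
    obtain ⟨z, h1, _, rfl⟩ := hr
    exact abs_tensorA_le J z h1
  set S : ℕ → ℝ := fun k => sSup (AS k) with hS
  have hS_nonneg : ∀ k, 0 ≤ S k := fun k => by
    obtain ⟨t₀', ht'⟩ := hne k
    obtain ⟨z, _, _, rfl⟩ := ht'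
    exact le_trans (abs_nonneg _) (le_csSup (hbdd k) (by exact ⟨z, ‹_›, ‹_›, rfl⟩))
  have hSp : S p ≤ B := by
    refine csSup_le (hne p) fun r hr => ?_
    obtain ⟨z, h1, h2, rfl⟩ := hr
    exact hB z fun j => h2 j j.isLt
  have hstep : ∀ k, k < p → S k ≤ S (k + 1) + (1/2) * S k := by
    intro k hk
    refine csSup_le (hne k) fun r hr => ?_
    obtain ⟨z, h1, h2, rfl⟩ := hr
    set j₀ : Fin p := ⟨k, hk⟩ with hj₀
    obtain ⟨t, htT, htd⟩ := hTnet (z j₀) (h1 j₀)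
    have hsplit : tensorA J z =
        tensorA J (Function.update z j₀ t) + tensorA J (Function.update z j₀ (z j₀ - t)) := by
      rw [← tensorA_update_add]
      have : t + (z j₀ - t) = z j₀ := by abel
      rw [this, Function.update_eq_self]
    have hterm1 : |tensorA J (Function.update z j₀ t)| ≤ S (k + 1) := by
      refine le_csSup (hbdd _) (hmem _ _ ?_ ?_)
      · intro j
        rcases eq_or_ne j j₀ with rfl | hj
        · rw [Function.update_self]; exact hT1 t htT
        · rw [Function.update_of_ne hj]; exact h1 j
      · intro j hj
        rcases eq_or_ne j j₀ with rfl | hjne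
        · rw [Function.update_self]; exact htT
        · rw [Function.update_of_ne hjne]
          refine h2 j ?_
          have : (j : ℕ) ≠ k := fun h => hjne (Fin.ext h)
          omega
    have hterm2 : |tensorA J (Function.update z j₀ (z j₀ - t))| ≤ (1/2) * S k := by
      set c := ‖z j₀ - t‖ with hc
      rcases eq_or_ne (z j₀ - t) 0 with h0 | h0
      · rw [h0]
        have : (0 : EuclideanSpace ℝ (Fin N)) = (0:ℝ) • (0 : EuclideanSpace ℝ (Fin N)) := by
          simp
        rw [this, tensorA_update_smul]
        simp only [zero_mul, abs_zero]
        have := hS_nonneg k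
        linarith
      · set u := c⁻¹ • (z j₀ - t) with hu
        have hcpos : 0 < c := norm_pos_iff.mpr h0
        have hzu : z j₀ - t = c • u := by
          rw [hu, smul_inv_smul₀ hcpos.ne']
        rw [hzu, tensorA_update_smul, abs_mul, abs_of_nonneg hcpos.le]
        have hu1 : ‖u‖ = 1 := by
          rw [hu, norm_smul, norm_inv, Real.norm_eq_abs, abs_of_nonneg hcpos.le, ← hc,
            inv_mul_cancel₀ hcpos.ne']
        have hin : |tensorA J (Function.update z j₀ u)| ≤ S k := by
          refine le_csSup (hbdd _) (hmem _ _ ?_ ?_)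
          · intro j
            rcases eq_or_ne j j₀ with rfl | hj
            · rw [Function.update_self]; exact hu1.le
            · rw [Function.update_of_ne hj]; exact h1 j
          · intro j hj
            have hjne : j ≠ j₀ := by
              intro h; rw [h] at hj; exact absurd hj (lt_irrefl k)
            rw [Function.update_of_ne hjne]; exact h2 j hj
        exact mul_le_mul htd hin (abs_nonneg _) (by norm_num)
    calc |tensorA J z| ≤ |tensorA J (Function.update z j₀ t)|
        + |tensorA J (Function.update z j₀ (z j₀ - t))| := by
          rw [hsplit]; exact abs_add_le _ _
    _ ≤ S (k + 1) + (1/2) * S k := add_le_add hterm1 hterm2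
  have hdouble : ∀ k, k < p → S k ≤ 2 * S (k + 1) := by
    intro k hk
    have := hstep k hk
    linarith
  have hind : ∀ m, m ≤ p → S (p - m) ≤ 2 ^ m * B := by
    intro m
    induction m with
    | zero => intro _; simpa using hSp
    | succ m ih =>
      intro hm
      have h2 : p - (m+1) + 1 = p - m := by omega
      have hd := hdouble (p - (m+1)) (by omega)
      rw [h2] at hd
      have hi := ih (by omega)
      calc S (p - (m+1)) ≤ 2 * S (p - m) := hd
      _ ≤ 2 * (2 ^ m * B) := by linarith
      _ = 2 ^ (m+1) * B := by ring
  have h0 := hind p le_rfl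
  simp only [Nat.sub_self] at h0
  exact le_trans (le_csSup (hbdd 0) (hmem 0 y hy (fun j hj => absurd hj (by omega)))) h0

lemma separated_card_le {N : ℕ} (hN : 1 ≤ N) (F : Finset (EuclideanSpace ℝ (Fin N)))
    (hF1 : ∀ t ∈ F, ‖t‖ ≤ 1)
    (hsep : ∀ s ∈ F, ∀ t ∈ F, s ≠ t → 1/2 ≤ dist s t) :
    F.card ≤ 8 ^ N := by
  haveI : Nonempty (Fin N) := ⟨⟨0, hN⟩⟩
  haveI : Nontrivial (EuclideanSpace ℝ (Fin N)) := by
    refine ⟨0, EuclideanSpace.single ⟨0, hN⟩ 1, ?_⟩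
    intro h
    have := congrArg (fun f => f ⟨0, hN⟩) h
    simp [EuclideanSpace.single_apply] at this
  set μ : Measure (EuclideanSpace ℝ (Fin N)) := volume with hμ
  have hdisj : (F : Set (EuclideanSpace ℝ (Fin N))).PairwiseDisjoint
      (fun t => ball t (1/4)) := by
    intro s hs t ht hst
    apply ball_disjoint_ball
    rw [dist_eq_norm] at *
    calc (1:ℝ)/4 + 1/4 = 1/2 := by norm_num
    _ ≤ dist s t := hsep s hs t ht hst
  have hsub : ∀ t ∈ F, ball t (1/4) ⊆ ball (0 : EuclideanSpace ℝ (Fin N)) 2 := by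
    intro t ht x hx
    rw [mem_ball] at *
    calc dist x 0 ≤ dist x t + dist t 0 := dist_triangle _ _ _
    _ < 1/4 + 1 := by
        refine add_lt_add_of_lt_of_le hx ?_
        rw [dist_zero_right]; exact hF1 t ht
    _ ≤ 2 := by norm_num
  have hvol : ∑ t ∈ F, μ (ball t (1/4)) ≤ μ (ball (0 : EuclideanSpace ℝ (Fin N)) 2) := by
    rw [← measure_biUnion_finset hdisj (fun t _ => measurableSet_ball)]
    exact measure_mono (Set.iUnion₂_subset hsub)
  have hrank : Module.finrank ℝ (EuclideanSpace ℝ (Fin N)) = N := by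
    simp [finrank_euclideanSpace]
  have hball : ∀ t : EuclideanSpace ℝ (Fin N),
      μ (ball t (1/4)) = ENNReal.ofReal ((1/4 : ℝ) ^ N) * μ (ball 0 1) := by
    intro t
    rw [Measure.addHaar_ball μ t (by norm_num : (0:ℝ) ≤ 1/4), hrank]
  have hball2 : μ (ball (0 : EuclideanSpace ℝ (Fin N)) 2)
      = ENNReal.ofReal ((2:ℝ) ^ N) * μ (ball 0 1) := by
    rw [Measure.addHaar_ball μ 0 (by norm_num : (0:ℝ) ≤ 2), hrank]
  rw [hball2] at hvol
  simp only [hball, Finset.sum_const, nsmul_eq_mul] at hvol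
  have hv0 : μ (ball (0 : EuclideanSpace ℝ (Fin N)) 1) ≠ 0 :=
    (measure_ball_pos μ 0 one_pos).ne'
  have hvt : μ (ball (0 : EuclideanSpace ℝ (Fin N)) 1) ≠ ⊤ :=
    measure_ball_lt_top.ne
  have hmul : (F.card : ℝ≥0∞) * ENNReal.ofReal ((1/4 : ℝ) ^ N) ≤ ENNReal.ofReal ((2:ℝ) ^ N) := by
    rw [← mul_assoc] at hvol
    exact (ENNReal.mul_le_mul_iff_left hv0 hvt).mp hvol
  have hcast : (F.card : ℝ≥0∞) ≤ ENNReal.ofReal ((8:ℝ) ^ N) := by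
    have h4 : ENNReal.ofReal ((1/4:ℝ)^N) ≠ 0 := by
      simp only [ne_eq, ENNReal.ofReal_eq_zero, not_le]
      positivity
    have h4t : ENNReal.ofReal ((1/4:ℝ)^N) ≠ ⊤ := ENNReal.ofReal_ne_top
    rw [← ENNReal.le_div_iff_mul_le (Or.inl h4) (Or.inl h4t)] at hmul
    refine le_trans hmul (le_of_eq ?_)
    rw [← ENNReal.ofReal_div_of_pos (by positivity)]
    congr 1
    rw [div_eq_iff (by positivity)]
    rw [← mul_pow]
    norm_num
  have h8 : ENNReal.ofReal ((8:ℝ) ^ N) = ((8^N : ℕ) : ℝ≥0∞) := by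
    rw [show ((8:ℝ)^N) = ((8^N : ℕ) : ℝ) by push_cast; ring, ENNReal.ofReal_natCast]
  rw [h8] at hcast
  exact_mod_cast hcast

lemma exists_net (N : ℕ) (hN : 1 ≤ N) :
    ∃ T : Finset (EuclideanSpace ℝ (Fin N)), T.Nonempty ∧ (∀ t ∈ T, ‖t‖ ≤ 1) ∧
      (∀ y : EuclideanSpace ℝ (Fin N), ‖y‖ ≤ 1 → ∃ t ∈ T, ‖y - t‖ ≤ 1/2) ∧
      T.card ≤ 8 ^ N := by
  classical
  set P : Finset (EuclideanSpace ℝ (Fin N)) → Prop := fun F =>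
    (∀ t ∈ F, ‖t‖ ≤ 1) ∧ (∀ s ∈ F, ∀ t ∈ F, s ≠ t → 1/2 ≤ dist s t) with hP
  set Cs : Set ℕ := {n | ∃ F, P F ∧ F.card = n} with hCs
  have hone : 1 ∈ Cs := by
    refine ⟨{0}, ⟨?_, ?_⟩, by simp⟩
    · intro t ht; rw [Finset.mem_singleton] at ht; simp [ht]
    · intro s hs t ht hst
      rw [Finset.mem_singleton] at hs ht
      exact absurd (hs.trans ht.symm) hst
  have hbdd : BddAbove Cs := by
    refine ⟨8 ^ N, fun n hn => ?_⟩
    obtain ⟨F, ⟨h1, h2⟩, rfl⟩ := hn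
    exact separated_card_le hN F h1 h2
  have hmem := Nat.sSup_mem ⟨1, hone⟩ hbdd
  obtain ⟨F, hF, hcard⟩ := hmem
  refine ⟨F, ?_, hF.1, ?_, ?_⟩
  · rw [← Finset.card_pos, hcard]
    exact le_csSup hbdd hone
  · intro y hy
    by_contra hcon
    push_neg at hcon
    have hyF : y ∉ F := fun h => by
      have := hcon y h
      rw [sub_self, norm_zero] at this
      norm_num at this
    have hP' : P (insert y F) := by
      constructor
      · intro t ht
        rcases Finset.mem_insert.mp ht with rfl | ht
        · exact hy
        · exact hF.1 t ht
      · intro s hs t ht hst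
        rcases Finset.mem_insert.mp hs with rfl | hs'
        · rcases Finset.mem_insert.mp ht with rfl | ht'
          · exact absurd rfl hst
          · rw [dist_eq_norm]; exact le_of_lt (hcon t ht')
        · rcases Finset.mem_insert.mp ht with rfl | ht'
          · rw [dist_comm, dist_eq_norm]; exact le_of_lt (hcon s hs')
          · exact hF.2 s hs' t ht' hst
    have : F.card + 1 ∈ Cs := ⟨insert y F, hP', by rw [Finset.card_insert_of_notMem hyF]⟩
    have := le_csSup hbdd this
    omega
  · rw [hcard]
    exact csSup_le ⟨1, hone⟩ fun n hn => by
      obtain ⟨F', ⟨h1, h2⟩, rfl⟩ := hn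
      exact separated_card_le hN F' h1 h2

lemma gauss_pdf_mul (t x : ℝ) :
    Real.exp (t * x) * gaussianPDFReal 0 1 x =
      Real.exp (t ^ 2 / 2) * gaussianPDFReal t 1 x := by
  simp only [gaussianPDFReal]
  rw [mul_left_comm, ← Real.exp_add, mul_left_comm, ← Real.exp_add]
  congr 2
  push_cast
  ring

lemma integrable_exp_gaussian (t : ℝ) :
    Integrable (fun x => Real.exp (t * x)) (gaussianReal 0 1) := by
  rw [gaussianReal_of_var_ne_zero 0 one_ne_zero]
  rw [gaussianPDF_def]
  have hmeas : Measurable fun x => Real.toNNReal (gaussianPDFReal 0 1 x) :=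
    (measurable_gaussianPDFReal 0 1).real_toNNReal
  have : (fun x => ENNReal.ofReal (gaussianPDFReal 0 1 x))
      = fun x => ((Real.toNNReal (gaussianPDFReal 0 1 x) : ℝ≥0) : ℝ≥0∞) := rfl
  rw [this, integrable_withDensity_iff_integrable_coe_smul hmeas]
  refine Integrable.congr ((integrable_gaussianPDFReal t 1).const_mul (Real.exp (t^2/2))) ?_
  filter_upwards with x
  rw [← gauss_pdf_mul]
  have hco : (Real.toNNReal (gaussianPDFReal 0 1 x) : ℝ) = gaussianPDFReal 0 1 x :=
    Real.coe_toNNReal _ (gaussianPDFReal_nonneg 0 1 x)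
  rw [smul_eq_mul, hco]
  ring

lemma integral_exp_gaussian (t : ℝ) :
    ∫ x, Real.exp (t * x) ∂(gaussianReal 0 1) = Real.exp (t ^ 2 / 2) := by
  rw [gaussianReal_of_var_ne_zero 0 one_ne_zero, gaussianPDF_def]
  have hmeas : Measurable fun x => Real.toNNReal (gaussianPDFReal 0 1 x) :=
    (measurable_gaussianPDFReal 0 1).real_toNNReal
  have h1 : (fun x => ENNReal.ofReal (gaussianPDFReal 0 1 x))
      = fun x => ((Real.toNNReal (gaussianPDFReal 0 1 x) : ℝ≥0) : ℝ≥0∞) := rfl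
  rw [h1, integral_withDensity_eq_integral_smul hmeas]
  have h2 : ∀ x : ℝ, (Real.toNNReal (gaussianPDFReal 0 1 x)) • Real.exp (t * x)
      = Real.exp (t^2/2) * gaussianPDFReal t 1 x := by
    intro x
    have : (Real.toNNReal (gaussianPDFReal 0 1 x) : ℝ) = gaussianPDFReal 0 1 x :=
      Real.coe_toNNReal _ (gaussianPDFReal_nonneg 0 1 x)
    rw [NNReal.smul_def, smul_eq_mul, this, mul_comm, gauss_pdf_mul]
  rw [integral_congr_ae (Filter.Eventually.of_forall h2), integral_const_mul,
    integral_gaussianPDFReal_eq_one t one_ne_zero, mul_one]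

lemma integrable_exp_rv {Ω : Type} [MeasurableSpace Ω] (μ : Measure Ω) (X : Ω → ℝ)
    (hX : Measurable X) (hmap : Measure.map X μ = gaussianReal 0 1) (u : ℝ) :
    Integrable (fun ω => Real.exp (u * X ω)) μ := by
  have h := integrable_exp_gaussian u
  rw [← hmap] at h
  exact (integrable_map_measure (Measurable.aestronglyMeasurable (by fun_prop))
    hX.aemeasurable).mp h

lemma integral_exp_rv {Ω : Type} [MeasurableSpace Ω] (μ : Measure Ω) (X : Ω → ℝ)
    (hX : Measurable X) (hmap : Measure.map X μ = gaussianReal 0 1) (u : ℝ) :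
    ∫ ω, Real.exp (u * X ω) ∂μ = Real.exp (u ^ 2 / 2) := by
  have h := integral_exp_gaussian u
  rw [← hmap, integral_map hX.aemeasurable
    (Measurable.aestronglyMeasurable (by fun_prop))] at h
  exact h

lemma gauss_sum_exp {Ω : Type} [MeasurableSpace Ω] (μ : Measure Ω) [IsProbabilityMeasure μ]
    {p N : ℕ} (J : (Fin p → Fin N) → Ω → ℝ)
    (hmeas : ∀ i, Measurable (J i))
    (hmap : ∀ i, Measure.map (J i) μ = gaussianReal 0 1)
    (hind : iIndepFun J μ)
    (c : (Fin p → Fin N) → ℝ) (hc : ∑ i, c i ^ 2 ≤ 1) (t : ℝ) :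
    Integrable (fun ω => Real.exp (t * ∑ i, c i * J i ω)) μ ∧
    ∫ ω, Real.exp (t * ∑ i, c i * J i ω) ∂μ ≤ Real.exp (t ^ 2 / 2) := by
  set X : (Fin p → Fin N) → Ω → ℝ := fun i ω => c i * J i ω with hX
  have hXmeas : ∀ i, Measurable (X i) := fun i => (hmeas i).const_mul (c i)
  have hXint : ∀ i, Integrable (fun ω => Real.exp (t * X i ω)) μ := by
    intro i
    have h := integrable_exp_rv μ (J i) (hmeas i) (hmap i) (t * c i)
    refine h.congr ?_
    filter_upwards with ω
    rw [hX]
    ring_nf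
  have hXind : iIndepFun X μ :=
    hind.comp (fun i x => c i * x) (fun i => measurable_id.const_mul (c i))
  have hsum_eq : (fun ω => Real.exp (t * ∑ i, c i * J i ω))
      = fun ω => Real.exp (t * (∑ i, X i) ω) := by
    funext ω
    rw [Finset.sum_apply]
  have hint : Integrable (fun ω => Real.exp (t * ∑ i, c i * J i ω)) μ := by
    rw [hsum_eq]
    exact hXind.integrable_exp_mul_sum hXmeas (fun i _ => hXint i)
  refine ⟨hint, ?_⟩
  have hmgf : ∫ ω, Real.exp (t * ∑ i, c i * J i ω) ∂μ = mgf (∑ i, X i) μ t := by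
    rw [hsum_eq]; rfl
  rw [hmgf, hXind.mgf_sum hXmeas]
  have hmgfi : ∀ i, mgf (X i) μ t = Real.exp ((t * c i) ^ 2 / 2) := by
    intro i
    have h := integral_exp_rv μ (J i) (hmeas i) (hmap i) (t * c i)
    rw [mgf, ← h]
    apply integral_congr_ae
    filter_upwards with ω
    rw [hX]
    ring_nf
  simp_rw [hmgfi]
  rw [← Real.exp_sum]
  apply Real.exp_le_exp.mpr
  have : ∑ i, (t * c i) ^ 2 / 2 = t ^ 2 / 2 * ∑ i, c i ^ 2 := by
    rw [Finset.mul_sum]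
    exact Finset.sum_congr rfl fun i _ => by ring
  rw [this]
  calc t ^ 2 / 2 * ∑ i, c i ^ 2 ≤ t ^ 2 / 2 * 1 :=
    mul_le_mul_of_nonneg_left hc (by positivity)
  _ = t ^ 2 / 2 := mul_one _

end Aux
section Main
open Finset Real

/-- **Order-`N` ground state.** For every `p ≥ 1` there is `C = C(p) > 0` such that for
all `N ≥ 1`, the expected maximum of the `p`-spin Hamiltonian over the sphere of radius
`√N` is at most `C·N`. -/
theorem pspin_ground_state (p : ℕ) (hp : 1 ≤ p) :
    ∃ C > (0 : ℝ), ∀ N : ℕ, 1 ≤ N →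
      ∀ (Ω : Type) (_ : MeasurableSpace Ω) (μ : Measure Ω), IsProbabilityMeasure μ →
      ∀ J : (Fin p → Fin N) → Ω → ℝ,
        (∀ i, Measurable (J i)) →
        (∀ i, Measure.map (J i) μ = gaussianReal 0 1) →
        iIndepFun J μ →
        (∫ ω, ⨆ x : sphereN N, pspin p N (fun i => J i ω) x ∂μ) ≤ C * N := by
  refine ⟨2 ^ p * (7 * p + 3), by positivity, ?_⟩
  intro N hN Ω mΩ μ hprob J hJmeas hJmap hJind
  haveI := hprob
  obtain ⟨T, hT0, hT1, hTnet, hTcard⟩ := exists_net N hN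
  set F : Finset (Fin p → EuclideanSpace ℝ (Fin N)) :=
    Fintype.piFinset (fun _ : Fin p => T) with hF
  have hFcard : F.card = T.card ^ p := by
    rw [hF, Fintype.card_piFinset]
    simp
  set K : ℝ := (F.card : ℝ) with hKdef
  have hK1 : 1 ≤ K := by
    rw [hKdef, hFcard]
    have : 1 ≤ T.card := Finset.card_pos.mpr hT0
    exact_mod_cast Nat.one_le_pow _ _ this
  have hKpos : 0 < K := lt_of_lt_of_le one_pos hK1
  have hKle : K ≤ (8 : ℝ) ^ (N * p) := by
    rw [hKdef, hFcard]
    calc ((T.card ^ p : ℕ) : ℝ) ≤ (((8^N : ℕ) ^ p : ℕ) : ℝ) := by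
          exact_mod_cast Nat.pow_le_pow_left hTcard p
    _ = (8 : ℝ) ^ (N * p) := by push_cast; rw [← pow_mul]
  have hNpos : (0 : ℝ) < N := by exact_mod_cast hN
  set lam : ℝ := Real.sqrt N with hlam
  have hlam1 : 1 ≤ lam := by
    rw [hlam]
    rw [show (1:ℝ) = Real.sqrt 1 from (Real.sqrt_one).symm]
    exact Real.sqrt_le_sqrt (by exact_mod_cast hN)
  have hlampos : 0 < lam := lt_of_lt_of_le one_pos hlam1
  set a : ℝ := lam⁻¹ * Real.log (2 * K) + lam / 2 with ha
  -- the linear coefficient vectors attached to net points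
  have hcsum : ∀ t ∈ F, ∑ i : Fin p → Fin N, (∏ j, (t j) (i j)) ^ 2 ≤ 1 := by
    intro t ht
    rw [sum_prod_sq]
    refine Finset.prod_le_one (fun j _ => by positivity) (fun j _ => ?_)
    have htj : t j ∈ T := (Fintype.mem_piFinset.mp ht) j
    nlinarith [hT1 (t j) htj, norm_nonneg (t j)]
  set G : (Fin p → EuclideanSpace ℝ (Fin N)) → Ω → ℝ :=
    fun t ω => ∑ i : Fin p → Fin N, (∏ j, (t j) (i j)) * J i ω with hG
  have hGkey : ∀ t ∈ F, ∀ u : ℝ,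
      Integrable (fun ω => Real.exp (u * G t ω)) μ ∧
      ∫ ω, Real.exp (u * G t ω) ∂μ ≤ Real.exp (u ^ 2 / 2) := by
    intro t ht u
    exact gauss_sum_exp μ J hJmeas hJmap hJind _ (hcsum t ht) u
  have hGtensor : ∀ t (ω : Ω), tensorA (fun i => J i ω) t = G t ω := by
    intro t ω
    rw [tensorA, hG]
    exact Finset.sum_congr rfl fun i _ => mul_comm _ _
  set R : Ω → ℝ := fun ω => a + lam⁻¹ * Real.exp (-(lam * a)) *
    ∑ t ∈ F, (Real.exp (lam * G t ω) + Real.exp ((-lam) * G t ω)) with hR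
  have hRint : Integrable R μ := by
    refine (integrable_const a).add (Integrable.const_mul ?_ _)
    refine integrable_finset_sum _ (fun t ht => ?_)
    exact ((hGkey t ht lam).1).add ((hGkey t ht (-lam)).1)
  -- pointwise bound on each net value
  have hpoint : ∀ ω, ∀ t ∈ F, |G t ω| ≤ R ω := by
    intro ω t ht
    set z := |G t ω| with hz
    have h1 : lam * (z - a) ≤ Real.exp (lam * (z - a)) := by
      linarith [Real.add_one_le_exp (lam * (z - a))]
    have h2 : z ≤ a + lam⁻¹ * Real.exp (lam * (z - a)) := by
      have := mul_le_mul_of_nonneg_left h1 (inv_nonneg.mpr hlampos.le)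
      rw [← mul_assoc, inv_mul_cancel₀ hlampos.ne', one_mul] at this
      linarith
    have h3 : Real.exp (lam * (z - a))
        = Real.exp (-(lam * a)) * Real.exp (lam * z) := by
      rw [← Real.exp_add]; congr 1; ring
    have h4 : Real.exp (lam * z) ≤ Real.exp (lam * G t ω) + Real.exp ((-lam) * G t ω) := by
      rcases abs_cases (G t ω) with ⟨he, _⟩ | ⟨he, _⟩
      · rw [hz, he]
        exact le_add_of_nonneg_right (Real.exp_pos _).le
      · rw [hz, he, show lam * -G t ω = (-lam) * G t ω by ring]
        exact le_add_of_nonneg_left (Real.exp_pos _).le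
    have h5 : Real.exp (lam * G t ω) + Real.exp ((-lam) * G t ω)
        ≤ ∑ t' ∈ F, (Real.exp (lam * G t' ω) + Real.exp ((-lam) * G t' ω)) := by
      exact Finset.single_le_sum
        (f := fun t' => Real.exp (lam * G t' ω) + Real.exp ((-lam) * G t' ω))
        (fun t' _ => by positivity) ht
    have h6 : Real.exp (lam * (z - a)) ≤ Real.exp (-(lam * a)) *
        ∑ t' ∈ F, (Real.exp (lam * G t' ω) + Real.exp ((-lam) * G t' ω)) := by
      rw [h3]
      exact mul_le_mul_of_nonneg_left (le_trans h4 h5) (Real.exp_pos _).le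
    calc z ≤ a + lam⁻¹ * Real.exp (lam * (z - a)) := h2
    _ ≤ a + lam⁻¹ * (Real.exp (-(lam * a)) *
        ∑ t' ∈ F, (Real.exp (lam * G t' ω) + Real.exp ((-lam) * G t' ω))) := by
          have := mul_le_mul_of_nonneg_left h6 (inv_nonneg.mpr hlampos.le)
          linarith
    _ = R ω := by rw [hR]; ring
  -- sphere is nonempty
  haveI hsne : Nonempty (sphereN N) := by
    refine ⟨⟨EuclideanSpace.single ⟨0, hN⟩ (Real.sqrt N), ?_⟩⟩
    simp only [sphereN, Metric.mem_sphere, dist_zero_right]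
    rw [EuclideanSpace.norm_single]
    exact abs_of_nonneg (Real.sqrt_nonneg _)
  -- pointwise bound on the sup
  have hsup : ∀ ω, (⨆ x : sphereN N, pspin p N (fun i => J i ω) x)
      ≤ Real.sqrt N * 2 ^ p * R ω := by
    intro ω
    refine ciSup_le ?_
    rintro ⟨x, hx⟩
    have hxnorm : ‖x‖ = Real.sqrt N := by
      simpa [sphereN, dist_zero_right] using hx
    set z : Fin p → EuclideanSpace ℝ (Fin N) := fun _ => (Real.sqrt N)⁻¹ • x with hzdef
    have hz1 : ∀ j, ‖z j‖ ≤ 1 := by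
      intro j
      rw [hzdef]
      simp only [norm_smul, norm_inv, Real.norm_eq_abs, abs_of_nonneg (Real.sqrt_nonneg _),
        hxnorm]
      rw [inv_mul_cancel₀ hlampos.ne']
    have hps : pspin p N (fun i => J i ω) x
        = Real.sqrt N * tensorA (fun i => J i ω) z := by
      rw [pspin, tensorA]
      have hcoord : ∀ (i : Fin p → Fin N) (j : Fin p),
          (z j) (i j) = (Real.sqrt N)⁻¹ * x (i j) := fun i j => rfl
      have hprod : ∀ i : Fin p → Fin N,
          ∏ j, (z j) (i j) = ((Real.sqrt N)⁻¹) ^ p * ∏ j, x (i j) := by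
        intro i
        simp_rw [hcoord]
        rw [Finset.prod_mul_distrib, Finset.prod_const, Finset.card_univ, Fintype.card_fin]
      have hsum : ∑ i : Fin p → Fin N, (fun i => J i ω) i * ∏ j, (z j) (i j)
          = ((Real.sqrt N)⁻¹) ^ p * ∑ i : Fin p → Fin N, J i ω * ∏ j, x (i j) := by
        rw [Finset.mul_sum]
        exact Finset.sum_congr rfl fun i _ => by rw [hprod i]; ring
      rw [hsum, ← mul_assoc]
      congr 1
      -- (N:ℝ) ^ (-((p-1)/2)) = √N * (√N)⁻¹ ^ p
      rw [Real.sqrt_eq_rpow]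
      rw [← Real.rpow_neg_one ((N:ℝ) ^ ((1:ℝ)/2))]
      rw [← Real.rpow_natCast (((N:ℝ) ^ ((1:ℝ)/2)) ^ (-1 : ℝ)) p]
      rw [← Real.rpow_mul (by positivity), ← Real.rpow_mul (by positivity),
        ← Real.rpow_add hNpos]
      congr 1
      ring
    rw [hps]
    have hbound : |tensorA (fun i => J i ω) z| ≤ 2 ^ p * R ω := by
      refine tensorA_net_bound (fun i => J i ω) T hT0 hT1 hTnet (R ω) ?_ z hz1
      intro t htT
      rw [hGtensor]
      exact hpoint ω t (Fintype.mem_piFinset.mpr htT)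
    calc Real.sqrt N * tensorA (fun i => J i ω) z
        ≤ Real.sqrt N * |tensorA (fun i => J i ω) z| :=
          mul_le_mul_of_nonneg_left (le_abs_self _) (Real.sqrt_nonneg _)
    _ ≤ Real.sqrt N * (2 ^ p * R ω) :=
          mul_le_mul_of_nonneg_left hbound (Real.sqrt_nonneg _)
    _ = Real.sqrt N * 2 ^ p * R ω := by ring
  -- integrate
  by_cases hI : Integrable (fun ω => ⨆ x : sphereN N, pspin p N (fun i => J i ω) x) μ
  · have hmono := integral_mono hI (hRint.const_mul (Real.sqrt N * 2 ^ p)) hsup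
    refine le_trans hmono ?_
    rw [integral_const_mul]
    -- compute/bound ∫ R
    have hRbound : ∫ ω, R ω ∂μ ≤ a + lam⁻¹ := by
      have hint2 : Integrable (fun ω => ∑ t ∈ F,
          (Real.exp (lam * G t ω) + Real.exp ((-lam) * G t ω))) μ :=
        integrable_finset_sum _ (fun t ht => ((hGkey t ht lam).1).add ((hGkey t ht (-lam)).1))
      have : ∫ ω, R ω ∂μ = a + lam⁻¹ * Real.exp (-(lam * a)) *
          ∫ ω, ∑ t ∈ F, (Real.exp (lam * G t ω) + Real.exp ((-lam) * G t ω)) ∂μ := by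
        rw [hR, integral_add (integrable_const a) (hint2.const_mul _), integral_const,
          integral_const_mul]
        simp [measure_univ]
      rw [this]
      have hsumint : ∫ ω, ∑ t ∈ F, (Real.exp (lam * G t ω) + Real.exp ((-lam) * G t ω)) ∂μ
          ≤ K * (2 * Real.exp (lam ^ 2 / 2)) := by
        rw [integral_finset_sum F
          (f := fun t ω => Real.exp (lam * G t ω) + Real.exp ((-lam) * G t ω))
          (fun t ht => ((hGkey t ht lam).1).add ((hGkey t ht (-lam)).1))]
        calc ∑ t ∈ F, ∫ ω, (Real.exp (lam * G t ω) + Real.exp ((-lam) * G t ω)) ∂μ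
            ≤ ∑ t ∈ F, (2 * Real.exp (lam ^ 2 / 2)) := by
              refine Finset.sum_le_sum fun t ht => ?_
              rw [integral_add ((hGkey t ht lam).1) ((hGkey t ht (-lam)).1)]
              have b1 := (hGkey t ht lam).2
              have b2 := (hGkey t ht (-lam)).2
              have hneg : ((-lam) ^ 2 : ℝ) = lam ^ 2 := by ring
              rw [hneg] at b2
              linarith
        _ = K * (2 * Real.exp (lam ^ 2 / 2)) := by
              rw [Finset.sum_const, nsmul_eq_mul, hKdef]
      have hexp : Real.exp (-(lam * a)) = (2 * K)⁻¹ * Real.exp (-(lam ^ 2 / 2)) := by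
        have : lam * a = Real.log (2 * K) + lam ^ 2 / 2 := by
          rw [ha, mul_add, ← mul_assoc, mul_inv_cancel₀ hlampos.ne', one_mul]
          ring
        rw [this, neg_add, Real.exp_add, Real.exp_neg, Real.exp_log (by positivity)]
      have hfinal : lam⁻¹ * Real.exp (-(lam * a)) *
          (K * (2 * Real.exp (lam ^ 2 / 2))) = lam⁻¹ := by
        rw [hexp, Real.exp_neg]
        field_simp
      have hnn : 0 ≤ lam⁻¹ * Real.exp (-(lam * a)) := by positivity
      calc a + lam⁻¹ * Real.exp (-(lam * a)) *
          ∫ ω, ∑ t ∈ F, (Real.exp (lam * G t ω) + Real.exp ((-lam) * G t ω)) ∂μ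
          ≤ a + lam⁻¹ * Real.exp (-(lam * a)) * (K * (2 * Real.exp (lam ^ 2 / 2))) := by
            have := mul_le_mul_of_nonneg_left hsumint hnn
            linarith
      _ = a + lam⁻¹ := by rw [hfinal]
    -- final arithmetic
    have hlog : Real.log (2 * K) ≤ 1 + 7 * (N * p) := by
      rw [Real.log_mul (by norm_num) hKpos.ne']
      have l2 : Real.log 2 ≤ 1 := by
        linarith [Real.log_le_sub_one_of_pos (by norm_num : (0:ℝ) < 2)]
      have lK : Real.log K ≤ 7 * (N * p) := by
        calc Real.log K ≤ Real.log ((8:ℝ) ^ (N * p)) :=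
              Real.log_le_log hKpos hKle
        _ = (N * p : ℕ) * Real.log 8 := by rw [Real.log_pow]
        _ ≤ (N * p : ℕ) * 7 := by
              refine mul_le_mul_of_nonneg_left ?_ (by positivity)
              linarith [Real.log_le_sub_one_of_pos (by norm_num : (0:ℝ) < 8)]
        _ = 7 * (N * p) := by push_cast; ring
      linarith
    have hsqrtsq : Real.sqrt N * Real.sqrt N = (N : ℝ) :=
      Real.mul_self_sqrt hNpos.le
    have hii : Real.sqrt N * lam⁻¹ = 1 := by
      rw [hlam, mul_inv_cancel₀]
      rw [← hlam]; exact hlampos.ne'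
    have hNlam : Real.sqrt N = lam := hlam.symm ▸ rfl
    calc Real.sqrt N * 2 ^ p * ∫ ω, R ω ∂μ
        ≤ Real.sqrt N * 2 ^ p * (a + lam⁻¹) := by
          refine mul_le_mul_of_nonneg_left hRbound (by positivity)
    _ = 2 ^ p * (Real.sqrt N * lam⁻¹ * Real.log (2 * K)
          + Real.sqrt N * lam / 2 + Real.sqrt N * lam⁻¹) := by
          rw [ha]; ring
    _ = 2 ^ p * (Real.log (2 * K) + (N:ℝ) / 2 + 1) := by
          rw [hii, hNlam, hsqrtsq]
          ring
    _ ≤ 2 ^ p * (7 * p + 3) * (N : ℝ) := by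
          have hN1 : (1:ℝ) ≤ N := by exact_mod_cast hN
          have h2p : (0:ℝ) < 2 ^ p := by positivity
          have : Real.log (2 * K) + (N:ℝ)/2 + 1 ≤ (7 * p + 3) * N := by
            have hp0 : (0:ℝ) ≤ p := by positivity
            nlinarith [hlog]
          calc 2 ^ p * (Real.log (2 * K) + (N:ℝ)/2 + 1)
              ≤ 2 ^ p * ((7 * p + 3) * N) := mul_le_mul_of_nonneg_left this h2p.le
          _ = 2 ^ p * (7 * p + 3) * N := by ring
  · rw [integral_undef hI]
    have hN0 : (0:ℝ) ≤ N := hNpos.le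
    positivity

end Main
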